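/- Let G be a finite directed graph on n vertices with at most h vertices of in-degree ≥ 2 and such that Σ_{v : d⁻(v) ≥ 2} d⁻(v) ≤ 2h+1. Then for any vertex u and any ℓ ≥ 1, the number of vertices from which u is reachable by a directed path of length at most ℓ is at most 1 + ℓ(2h + 1). -/

import Mathlib

open Finset

section Aux

def ballR {V : Type} [Fintype V] (rel : V → V → Prop) [DecidableRel rel] (u : V) :
    ℕ → Finset V
  | 0 => {u}
  | m + 1 => Finset.univ.filter (fun v => ∃ w ∈ ballR rel u m, rel v w)

/-- ball of radius m -/
def ballT {V : Type} [Fintype V] [DecidableEq V] (rel : V → V → Prop) [DecidableRel rel]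
    (u : V) (m : ℕ) : Finset V := (Finset.range (m + 1)).biUnion (ballR rel u)

/-- level set -/
def ballS {V : Type} [Fintype V] [DecidableEq V] (rel : V → V → Prop) [DecidableRel rel]
    (u : V) : ℕ → Finset V
  | 0 => {u}
  | m + 1 => ballT rel u (m + 1) \ ballT rel u m

variable {V : Type} [Fintype V] [DecidableEq V] (rel : V → V → Prop) [DecidableRel rel] (u : V)

lemma mem_ballR {v : V} {m : ℕ} :
    v ∈ ballR rel u m ↔ ∃ g : ℕ → V, g 0 = v ∧ g m = u ∧ ∀ i < m, rel (g i) (g (i + 1)) := by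
  induction m generalizing v with
  | zero =>
      simp only [ballR, mem_singleton]
      constructor
      · rintro rfl; exact ⟨fun _ => v, rfl, rfl, by omega⟩
      · rintro ⟨g, h0, hm, -⟩; rw [← h0, hm]
  | succ m ih =>
      simp only [ballR, mem_filter, mem_univ, true_and]
      constructor
      · rintro ⟨w, hw, hr⟩
        obtain ⟨g, h0, hm, he⟩ := (ih).mp hw
        refine ⟨fun i => if i = 0 then v else g (i - 1), by simp, by simp [hm], ?_⟩
        intro i hi
        rcases Nat.eq_zero_or_pos i with rfl | hpos
        · simpa [h0] using hr
        · have h1 : ¬ (i = 0) := by omega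
          have h2 : ¬ (i + 1 = 0) := by omega
          simp only [h1, h2, if_false]
          have h3 : i + 1 - 1 = i - 1 + 1 := by omega
          rw [h3]
          exact he (i - 1) (by omega)
      · rintro ⟨g, h0, hm, he⟩
        refine ⟨g 1, ih.mpr ⟨fun i => g (i + 1), rfl, hm, fun i hi => he (i + 1) (by omega)⟩, ?_⟩
        rw [← h0]; exact he 0 (by omega)

lemma mem_ballT {v : V} {m : ℕ} :
    v ∈ ballT rel u m ↔ ∃ k ≤ m, v ∈ ballR rel u k := by
  simp [ballT, Nat.lt_succ_iff]

lemma ballT_mono {m : ℕ} : ballT rel u m ⊆ ballT rel u (m + 1) := by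
  intro v hv
  rw [mem_ballT] at hv ⊢
  obtain ⟨k, hk, hv⟩ := hv
  exact ⟨k, by omega, hv⟩

lemma ballT_zero : ballT rel u 0 = {u} := by
  ext v; simp [mem_ballT, ballR, Nat.le_zero]

lemma ballS_step {m : ℕ} {v : V} (hv : v ∈ ballS rel u (m + 1)) :
    ∃ w ∈ ballS rel u m, rel v w := by
  simp only [ballS, mem_sdiff] at hv
  obtain ⟨hv1, hv2⟩ := hv
  rw [mem_ballT] at hv1
  obtain ⟨k, hk, hvk⟩ := hv1
  have hk' : k = m + 1 := by
    by_contra hne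
    exact hv2 ((mem_ballT rel u).mpr ⟨k, by omega, hvk⟩)
  subst hk'
  simp only [ballR, mem_filter, mem_univ, true_and] at hvk
  obtain ⟨w, hw, hr⟩ := hvk
  match m with
  | 0 => exact ⟨w, by simpa [ballS, ballR] using hw, hr⟩
  | j + 1 =>
      refine ⟨w, ?_, hr⟩
      simp only [ballS, mem_sdiff]
      constructor
      · exact (mem_ballT rel u).mpr ⟨j + 1, le_refl _, hw⟩
      · intro hwT
        obtain ⟨k', hk', hwk'⟩ := (mem_ballT rel u).mp hwT
        apply hv2
        refine (mem_ballT rel u).mpr ⟨k' + 1, by omega, ?_⟩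
        simp only [ballR, mem_filter, mem_univ, true_and]
        exact ⟨w, hwk', hr⟩

end Aux

theorem stmt_11 (V : Type) [Fintype V] (rel : V → V → Prop) [DecidableRel rel]
    (indeg : V → ℕ)
    (hind : ∀ v : V, indeg v = (Finset.univ.filter fun u => rel u v).card)
    (h ℓ : ℕ) (hℓ : 1 ≤ ℓ)
    (hnum : (Finset.univ.filter fun v => 2 ≤ indeg v).card ≤ h)
    (hsum : ∑ v ∈ Finset.univ.filter (fun v => 2 ≤ indeg v), indeg v ≤ 2 * h + 1)
    (u : V) :
    Nat.card {v : V // ∃ m ≤ ℓ, ∃ g : ℕ → V,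
        g 0 = v ∧ g m = u ∧ ∀ i < m, rel (g i) (g (i + 1))} ≤
      1 + ℓ * (2 * h + 1) := by
  classical
  -- excess function
  set e : V → ℕ := fun v => if 2 ≤ indeg v then indeg v - 1 else 0 with he
  -- the total excess is at most 2h
  have hE : ∑ v : V, e v ≤ 2 * h := by
    set big := Finset.univ.filter (fun v => 2 ≤ indeg v) with hbig
    have h1 : ∑ v : V, e v = ∑ v ∈ big, e v := by
      rw [eq_comm]
      apply Finset.sum_subset (Finset.subset_univ _)
      intro x _ hx
      simp only [hbig, mem_filter, mem_univ, true_and] at hx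
      simp [he, hx]
    have h2 : (∑ v ∈ big, e v) + big.card = ∑ v ∈ big, indeg v := by
      rw [Finset.card_eq_sum_ones, ← Finset.sum_add_distrib]
      apply Finset.sum_congr rfl
      intro x hx
      simp only [hbig, mem_filter, mem_univ, true_and] at hx
      simp only [he, if_pos hx]
      omega
    have h3 : big = ∅ → ∑ v ∈ big, e v = 0 := by
      intro h'; simp [h']
    rcases eq_or_ne big ∅ with hb | hb
    · rw [h1, h3 hb]; omega
    · have hb1 : 1 ≤ big.card := Finset.card_pos.mpr (Finset.nonempty_iff_ne_empty.mpr hb)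
      rw [h1]
      omega
  -- per-step bound
  have step : ∀ m, (ballS rel u (m + 1)).card ≤
      (ballS rel u m).card + ∑ w ∈ ballS rel u m, e w := by
    intro m
    have hsub : ballS rel u (m + 1) ⊆
        (ballS rel u m).biUnion (fun w => (ballS rel u (m + 1)).filter (fun v => rel v w)) := by
      intro v hv
      obtain ⟨w, hw, hr⟩ := ballS_step rel u hv
      exact Finset.mem_biUnion.mpr ⟨w, hw, Finset.mem_filter.mpr ⟨hv, hr⟩⟩
    calc (ballS rel u (m + 1)).card
        ≤ ((ballS rel u m).biUnion
            (fun w => (ballS rel u (m + 1)).filter (fun v => rel v w))).card :=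
          Finset.card_le_card hsub
      _ ≤ ∑ w ∈ ballS rel u m, ((ballS rel u (m + 1)).filter (fun v => rel v w)).card :=
          Finset.card_biUnion_le
      _ ≤ ∑ w ∈ ballS rel u m, (1 + e w) := by
          apply Finset.sum_le_sum
          intro w _
          have h1 : ((ballS rel u (m + 1)).filter (fun v => rel v w)).card ≤ indeg w := by
            rw [hind]
            exact Finset.card_le_card
              (Finset.filter_subset_filter _ (Finset.subset_univ _))
          have : indeg w ≤ 1 + e w := by
            simp only [he]; split_ifs <;> omega
          omega
      _ = (ballS rel u m).card + ∑ w ∈ ballS rel u m, e w := by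
          rw [Finset.sum_add_distrib, Finset.card_eq_sum_ones]
  -- telescoped bound
  have G : ∀ m, (ballS rel u (m + 1)).card ≤ 1 + ∑ w ∈ ballT rel u m, e w := by
    intro m
    induction m with
    | zero =>
        have := step 0
        simp only [ballS] at this
        rw [ballT_zero]
        simpa [ballS] using this
    | succ m ih =>
        have hsd : ∑ w ∈ ballT rel u (m + 1) \ ballT rel u m, e w + ∑ w ∈ ballT rel u m, e w
            = ∑ w ∈ ballT rel u (m + 1), e w :=
          Finset.sum_sdiff (ballT_mono rel u)
        have hS : ballS rel u (m + 1) = ballT rel u (m + 1) \ ballT rel u m := rfl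
        have := step (m + 1)
        rw [hS] at this ih
        omega
  -- level bound
  have level : ∀ m, (ballS rel u (m + 1)).card ≤ 2 * h + 1 := by
    intro m
    have h1 := G m
    have h2 : ∑ w ∈ ballT rel u m, e w ≤ ∑ v : V, e v :=
      Finset.sum_le_sum_of_subset (Finset.subset_univ _)
    omega
  -- ball card as sum of levels
  have hcard : ∀ m, (ballT rel u m).card = ∑ k ∈ Finset.range (m + 1), (ballS rel u k).card := by
    intro m
    induction m with
    | zero => simp [ballT_zero, ballS]
    | succ m ih =>
        have := Finset.card_sdiff_add_card_eq_card (ballT_mono rel u (m := m))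
        rw [Finset.sum_range_succ, ← ih]
        have hS : ballS rel u (m + 1) = ballT rel u (m + 1) \ ballT rel u m := rfl
        rw [hS]
        omega
  have hball : (ballT rel u ℓ).card ≤ 1 + ℓ * (2 * h + 1) := by
    rw [hcard ℓ, Finset.sum_range_succ']
    have h1 : (ballS rel u 0).card = 1 := by simp [ballS]
    have h2 : ∑ k ∈ Finset.range ℓ, (ballS rel u (k + 1)).card ≤ ℓ * (2 * h + 1) := by
      calc ∑ k ∈ Finset.range ℓ, (ballS rel u (k + 1)).card
          ≤ ∑ k ∈ Finset.range ℓ, (2 * h + 1) := Finset.sum_le_sum (fun k _ => level k)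
        _ = ℓ * (2 * h + 1) := by rw [Finset.sum_const, Finset.card_range, smul_eq_mul]
    omega
  -- identify the subtype with the ball
  have hiff : ∀ v : V, (∃ m ≤ ℓ, ∃ g : ℕ → V,
      g 0 = v ∧ g m = u ∧ ∀ i < m, rel (g i) (g (i + 1))) ↔ v ∈ ballT rel u ℓ := by
    intro v
    rw [mem_ballT]
    constructor
    · rintro ⟨m, hm, hg⟩; exact ⟨m, hm, (mem_ballR rel u).mpr hg⟩
    · rintro ⟨m, hm, hg⟩; exact ⟨m, hm, (mem_ballR rel u).mp hg⟩
  calc Nat.card {v : V // ∃ m ≤ ℓ, ∃ g : ℕ → V,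
        g 0 = v ∧ g m = u ∧ ∀ i < m, rel (g i) (g (i + 1))}
      = Nat.card {v : V // v ∈ ballT rel u ℓ} :=
        Nat.card_congr (Equiv.subtypeEquivRight hiff)
    _ = (ballT rel u ℓ).card := by
        rw [Nat.card_eq_fintype_card, Fintype.card_coe]
    _ ≤ 1 + ℓ * (2 * h + 1) := hball
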